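/- Let 0 < D ≤ 1, set o_1 = (0,1), o_2 = (0,−1) ∈ ℝ², and for x ∈ ℝ² with x ≠ o_1, x ≠ o_2 let ρ_c(x) denote the unique minimizer of ‖u − (1,0)‖ over U(x) = { u ∈ ℝ² : −⟨(x−o_i)/‖x−o_i‖, u⟩ ≤ (‖x−o_i‖² − D²)/(2‖x−o_i‖) for i = 1,2 }. Then: (1) if 0 < D < 1, every Lipschitz constant of the map t ↦ ρ_c((t,0)) on the interval (−D−1, D−1) is at least D/(1−D); (2) if D = 1, the map t ↦ ρ_c((t,0)) is discontinuous at t = 0 (its limit as t ↑ 0 is (0,0) while ρ_c((0,0)) = (1,0)), so ρ_c admits no Lipschitz constant on its domain. -/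

import Mathlib

open scoped RealInnerProductSpace

/-- The point `(x, y)` of the Euclidean plane. -/
noncomputable def vec2 (x y : ℝ) : EuclideanSpace ℝ (Fin 2) :=
  (WithLp.equiv 2 (Fin 2 → ℝ)).symm ![x, y]

/-- The feasible set of Example 1 of the paper: the two control-barrier constraints
for the disc obstacles of radius `D` centered at `o₁ = (0,1)` and `o₂ = (0,−1)`. -/
def Ufeas (D : ℝ) (x : EuclideanSpace ℝ (Fin 2)) : Set (EuclideanSpace ℝ (Fin 2)) :=
  {u | -⟪(‖x - vec2 0 1‖)⁻¹ • (x - vec2 0 1), u⟫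
        ≤ (‖x - vec2 0 1‖ ^ 2 - D ^ 2) / (2 * ‖x - vec2 0 1‖) ∧
       -⟪(‖x - vec2 0 (-1)‖)⁻¹ • (x - vec2 0 (-1)), u⟫
        ≤ (‖x - vec2 0 (-1)‖ ^ 2 - D ^ 2) / (2 * ‖x - vec2 0 (-1)‖)}

lemma vec2_sub (a b c d : ℝ) : vec2 a b - vec2 c d = vec2 (a-c) (b-d) := by
  ext i; fin_cases i <;> simp [vec2]

lemma vec2_norm (a b : ℝ) : ‖vec2 a b‖ = Real.sqrt (a^2 + b^2) := by
  simp [EuclideanSpace.norm_eq, Fin.sum_univ_two, vec2, sq_abs]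

lemma vec2_inner (a b : ℝ) (u : EuclideanSpace ℝ (Fin 2)) :
    ⟪vec2 a b, u⟫ = a * u 0 + b * u 1 := by
  simp [PiLp.inner_apply, Fin.sum_univ_two, vec2]
  ring

lemma vec2_smul (r a b : ℝ) : r • vec2 a b = vec2 (r*a) (r*b) := by
  ext i; fin_cases i <;> simp [vec2]

lemma vec2_ne (a b c d : ℝ) (h : b ≠ d) : vec2 a b ≠ vec2 c d := by
  intro h'
  exact h (congrArg (fun v : EuclideanSpace ℝ (Fin 2) => v 1) h')

lemma mem_Ufeas_iff (D t : ℝ) (u : EuclideanSpace ℝ (Fin 2)) :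
    u ∈ Ufeas D (vec2 t 0) ↔
      -(t * u 0 - u 1) ≤ (t^2 + 1 - D^2)/2 ∧ -(t * u 0 + u 1) ≤ (t^2 + 1 - D^2)/2 := by
  have hpos : (0:ℝ) < t^2 + 1 := by positivity
  have hr : (0:ℝ) < Real.sqrt (t^2+1) := Real.sqrt_pos.2 hpos
  have hr2 : Real.sqrt (t^2+1)^2 = t^2+1 := Real.sq_sqrt hpos.le
  have h1 : vec2 t 0 - vec2 0 1 = vec2 t (-1) := by rw [vec2_sub]; norm_num
  have h2 : vec2 t 0 - vec2 0 (-1) = vec2 t 1 := by rw [vec2_sub]; norm_num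
  have hn1 : ‖vec2 t (-1)‖ = Real.sqrt (t^2+1) := by rw [vec2_norm]; norm_num
  have hn2 : ‖vec2 t 1‖ = Real.sqrt (t^2+1) := by rw [vec2_norm]; norm_num
  set r := Real.sqrt (t^2+1) with hrdef
  have key : ∀ a : ℝ, (-(⟪r⁻¹ • vec2 t a, u⟫) ≤ (r^2 - D^2)/(2*r)) ↔
      (-(t * u 0 + a * u 1) ≤ (t^2+1-D^2)/2) := by
    intro a
    rw [vec2_smul, vec2_inner, hr2]
    rw [show -(r⁻¹*t * u 0 + r⁻¹*a * u 1) = r⁻¹ * (-(t*u 0 + a*u 1)) by ring,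
        show (t^2+1-D^2)/(2*r) = r⁻¹ * ((t^2+1-D^2)/2) by rw [inv_mul_eq_div, div_div, mul_comm]]
    exact mul_le_mul_iff_right₀ (inv_pos.2 hr)
  rw [Ufeas, Set.mem_setOf_eq, h1, h2, hn1, hn2, key (-1), key 1]
  constructor <;> rintro ⟨ha, hb⟩ <;> constructor <;> linarith

lemma abs_apply_le_norm (v : EuclideanSpace ℝ (Fin 2)) : |v 0| ≤ ‖v‖ := by
  rw [EuclideanSpace.norm_eq, Fin.sum_univ_two,
    show |v 0| = Real.sqrt ((v 0)^2) from (Real.sqrt_sq_eq_abs _).symm]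
  apply Real.sqrt_le_sqrt
  simp only [Real.norm_eq_abs, sq_abs]
  nlinarith [sq_nonneg (v 1)]

lemma rho_eq (D : ℝ) (hD1 : D ≤ 1)
    (ρc : EuclideanSpace ℝ (Fin 2) → EuclideanSpace ℝ (Fin 2))
    (hρc : ∀ x : EuclideanSpace ℝ (Fin 2), x ≠ vec2 0 1 → x ≠ vec2 0 (-1) →
      ρc x ∈ Ufeas D x ∧
      (∀ u ∈ Ufeas D x, ‖ρc x - vec2 1 0‖ ≤ ‖u - vec2 1 0‖) ∧
      (∀ ρ' ∈ Ufeas D x,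
        (∀ u ∈ Ufeas D x, ‖ρ' - vec2 1 0‖ ≤ ‖u - vec2 1 0‖) → ρ' = ρc x))
    (t : ℝ) (h1 : -D-1 < t) (h2 : t < D-1) :
    ρc (vec2 t 0) = vec2 ((D^2-t^2-1)/(2*t)) 0 := by
  have ht : t < 0 := by linarith
  have ht0 : t ≠ 0 := ht.ne
  set c := (D^2-t^2-1)/(2*t) with hc
  have hceq : t * c = (D^2-t^2-1)/2 := by rw [hc]; field_simp
  have hc1 : c ≤ 1 := by
    rw [hc, div_le_iff_of_neg (by linarith : 2*t < 0)]
    nlinarith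
  have hne1 : vec2 t 0 ≠ vec2 0 1 := vec2_ne _ _ _ _ (by norm_num)
  have hne2 : vec2 t 0 ≠ vec2 0 (-1) := vec2_ne _ _ _ _ (by norm_num)
  have hv0 : (vec2 c 0) 0 = c := rfl
  have hv1 : (vec2 c 0) 1 = 0 := rfl
  have hfeas : vec2 c 0 ∈ Ufeas D (vec2 t 0) := by
    rw [mem_Ufeas_iff, hv0, hv1]
    constructor <;> · nlinarith [hceq]
  have hmin : ∀ u ∈ Ufeas D (vec2 t 0), ‖vec2 c 0 - vec2 1 0‖ ≤ ‖u - vec2 1 0‖ := by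
    intro u hu
    rw [mem_Ufeas_iff] at hu
    obtain ⟨ha, hb⟩ := hu
    have hu0 : u 0 ≤ c := by
      rw [hc, le_div_iff_of_neg (by linarith : 2*t < 0)]
      linarith
    have lhs : ‖vec2 c 0 - vec2 1 0‖ = 1 - c := by
      rw [vec2_sub, vec2_norm]
      rw [show (0:ℝ) - 0 = 0 by ring]
      rw [show (c-1)^2 + 0^2 = (c-1)^2 by ring, Real.sqrt_sq_eq_abs,
        abs_of_nonpos (by linarith)]
      ring
    have hsub0 : (u - vec2 1 0) 0 = u 0 - 1 := by
      simp [vec2]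
    calc ‖vec2 c 0 - vec2 1 0‖ = 1 - c := lhs
      _ ≤ 1 - u 0 := by linarith
      _ ≤ |u 0 - 1| := by rw [abs_sub_comm]; exact le_abs_self _
      _ = |(u - vec2 1 0) 0| := by rw [hsub0]
      _ ≤ ‖u - vec2 1 0‖ := abs_apply_le_norm _
  exact ((hρc _ hne1 hne2).2.2 (vec2 c 0) hfeas hmin).symm

/-- The non-Lipschitzness claim of Example 1 of the paper: (1) for `0 < D < 1`,
every Lipschitz constant of `t ↦ ρ_c((t,0))` on `(−D−1, D−1)` is at least
`D/(1−D)`; (2) for `D = 1`, the map `t ↦ ρ_c((t,0))` is discontinuous at `t = 0`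
(its left limit is `(0,0)` while `ρ_c((0,0)) = (1,0)`), so `ρ_c` admits no
Lipschitz constant on its domain. -/
theorem stmt18 (D : ℝ) (hD0 : 0 < D) (hD1 : D ≤ 1)
    (ρc : EuclideanSpace ℝ (Fin 2) → EuclideanSpace ℝ (Fin 2))
    (hρc : ∀ x : EuclideanSpace ℝ (Fin 2), x ≠ vec2 0 1 → x ≠ vec2 0 (-1) →
      ρc x ∈ Ufeas D x ∧
      (∀ u ∈ Ufeas D x, ‖ρc x - vec2 1 0‖ ≤ ‖u - vec2 1 0‖) ∧
      (∀ ρ' ∈ Ufeas D x,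
        (∀ u ∈ Ufeas D x, ‖ρ' - vec2 1 0‖ ≤ ‖u - vec2 1 0‖) → ρ' = ρc x)) :
    (D < 1 →
      ∀ L : ℝ,
        (∀ t ∈ Set.Ioo (-D - 1) (D - 1), ∀ t' ∈ Set.Ioo (-D - 1) (D - 1),
          ‖ρc (vec2 t 0) - ρc (vec2 t' 0)‖ ≤ L * |t - t'|) →
        D / (1 - D) ≤ L) ∧
    (D = 1 →
      Filter.Tendsto (fun t : ℝ => ρc (vec2 t 0)) (nhdsWithin 0 (Set.Iio 0))
        (nhds (0 : EuclideanSpace ℝ (Fin 2))) ∧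
      ρc (vec2 0 0) = vec2 1 0 ∧
      ¬∃ L : ℝ, ∀ x : EuclideanSpace ℝ (Fin 2), x ≠ vec2 0 1 → x ≠ vec2 0 (-1) →
        ∀ y : EuclideanSpace ℝ (Fin 2), y ≠ vec2 0 1 → y ≠ vec2 0 (-1) →
          ‖ρc x - ρc y‖ ≤ L * ‖x - y‖) := by
  constructor
  · -- Part 1
    intro hD L hL
    have hkey : ∀ s ∈ Set.Ioo (0:ℝ) D,
        (1-D^2)/(2*((D-1-s)*(D-1-2*s))) - 1/2 ≤ L := by
      intro s hs
      obtain ⟨hs0, hsD⟩ := hs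
      have ht0 : (D-1-s : ℝ) ≠ 0 := by intro h; nlinarith
      have ht0' : (D-1-2*s : ℝ) ≠ 0 := by intro h; nlinarith
      have e1 := rho_eq D hD1 ρc hρc (D-1-s) (by linarith) (by linarith)
      have e2 := rho_eq D hD1 ρc hρc (D-1-2*s) (by linarith) (by linarith)
      have hb := hL (D-1-s) ⟨by linarith, by linarith⟩ (D-1-2*s) ⟨by linarith, by linarith⟩
      rw [e1, e2, vec2_sub, vec2_norm] at hb
      have hq : (D^2-(D-1-s)^2-1)/(2*(D-1-s)) - (D^2-(D-1-2*s)^2-1)/(2*(D-1-2*s))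
          = s * ((1-D^2)/(2*((D-1-s)*(D-1-2*s))) - 1/2) := by
        rw [div_sub_div _ _ (mul_ne_zero two_ne_zero ht0) (mul_ne_zero two_ne_zero ht0'), div_sub' (mul_ne_zero two_ne_zero (mul_ne_zero ht0 ht0')) , mul_div_assoc', div_eq_div_iff (by positivity) (by positivity)]
        ring
      have habs : |(D-1-s) - (D-1-2*s)| = s := by
        rw [show (D-1-s) - (D-1-2*s) = s by ring, abs_of_pos hs0]
      rw [habs, hq] at hb
      rw [show ((0:ℝ)-0) = 0 by ring] at hb
      rw [show (s * ((1-D^2)/(2*((D-1-s)*(D-1-2*s))) - 1/2))^2 + (0:ℝ)^2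
          = (s * ((1-D^2)/(2*((D-1-s)*(D-1-2*s))) - 1/2))^2 by ring,
        Real.sqrt_sq_eq_abs, abs_mul, abs_of_pos hs0] at hb
      have h5 : s * ((1-D^2)/(2*((D-1-s)*(D-1-2*s))) - 1/2)
          ≤ s * |(1-D^2)/(2*((D-1-s)*(D-1-2*s))) - 1/2| :=
        mul_le_mul_of_nonneg_left (le_abs_self _) hs0.le
      nlinarith
    have h2 : (1-D) ≠ 0 := by linarith
    have tends : Filter.Tendsto (fun s : ℝ => (1-D^2)/(2*((D-1-s)*(D-1-2*s))) - 1/2)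
        (nhdsWithin 0 (Set.Ioi 0)) (nhds (D/(1-D))) := by
      have hden : (2*(((D:ℝ)-1-0)*(D-1-2*0))) ≠ 0 := by
        intro h; nlinarith
      have hcont : ContinuousAt (fun s : ℝ => (1-D^2)/(2*((D-1-s)*(D-1-2*s))) - 1/2) 0 := by
        apply ContinuousAt.sub _ continuousAt_const
        exact ContinuousAt.div continuousAt_const (by fun_prop) hden
      have h0 : (1-D^2)/(2*((D-1-0)*(D-1-2*0))) - 1/2 = D/(1-D) := by
        rw [show (2*(((D:ℝ)-1-0)*(D-1-2*0))) = 2*(1-D)^2 by ring]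
        rw [div_sub_div _ _ (by positivity) (by norm_num : (2:ℝ) ≠ 0),
          div_eq_div_iff (by positivity) h2]
        ring
      rw [← h0]
      exact hcont.tendsto.mono_left nhdsWithin_le_nhds
    refine le_of_tendsto tends ?_
    filter_upwards [Ioo_mem_nhdsGT_of_mem
      (⟨le_rfl, hD0⟩ : (0:ℝ) ∈ Set.Ico 0 D)] with s hs using hkey s hs
  · -- Part 2
    intro hDeq
    subst hDeq
    have rho1 : ∀ t : ℝ, -2 < t → t < 0 → ρc (vec2 t 0) = vec2 (-t/2) 0 := by
      intro t hm2 h0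
      have ht0 : t ≠ 0 := h0.ne
      have := rho_eq 1 le_rfl ρc hρc t (by linarith) (by linarith)
      rw [this, show ((1:ℝ)^2 - t^2 - 1)/(2*t) = -t/2 by
        rw [show (1:ℝ)^2 - t^2 - 1 = t * -t by ring, show (2:ℝ)*t = t*2 by ring,
          mul_div_mul_left (-t) 2 ht0]]
    have hb : ρc (vec2 0 0) = vec2 1 0 := by
      refine ((hρc (vec2 0 0) (vec2_ne _ _ _ _ (by norm_num))
        (vec2_ne _ _ _ _ (by norm_num))).2.2 (vec2 1 0) ?_ ?_).symm
      · rw [mem_Ufeas_iff]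
        have e0 : (vec2 1 0) 0 = 1 := rfl
        have e1 : (vec2 1 0) 1 = 0 := rfl
        rw [e0, e1]
        norm_num
      · intro u hu
        rw [sub_self]
        simpa using norm_nonneg _
    refine ⟨?_, hb, ?_⟩
    · have hcont : Filter.Tendsto (fun t : ℝ => (-t/2) • vec2 1 0)
          (nhdsWithin 0 (Set.Iio 0)) (nhds 0) := by
        have hc : Continuous fun t : ℝ => (-t/2) • vec2 1 0 := by fun_prop
        have h := hc.tendsto 0
        simp only [neg_zero, zero_div, zero_smul] at h
        exact h.mono_left nhdsWithin_le_nhds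
      apply hcont.congr'
      filter_upwards [Ioo_mem_nhdsLT_of_mem
        (⟨by norm_num, le_rfl⟩ : (0:ℝ) ∈ Set.Ioc (-2) 0)] with t ht
      rw [vec2_smul, mul_one, mul_zero, rho1 t ht.1 ht.2]
    · rintro ⟨L, hL⟩
      obtain ⟨m, hm1, hm2, hm0⟩ : ∃ m : ℝ, m ≤ 1 ∧ m ≤ 1/(2*(|L|+1)) ∧ 0 < m :=
        ⟨min 1 (1/(2*(|L|+1))), min_le_left _ _, min_le_right _ _, by positivity⟩
      have e1 := rho1 (-m) (by linarith) (by linarith)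
      have hthis := hL (vec2 (-m) 0) (vec2_ne _ _ _ _ (by norm_num))
        (vec2_ne _ _ _ _ (by norm_num)) (vec2 0 0) (vec2_ne _ _ _ _ (by norm_num))
        (vec2_ne _ _ _ _ (by norm_num))
      rw [e1, hb, vec2_sub, vec2_sub, vec2_norm, vec2_norm] at hthis
      have hA : Real.sqrt ((-(-m)/2-1)^2 + ((0:ℝ)-0)^2) = 1 - m/2 := by
        rw [show ((0:ℝ)-0) = 0 by ring,
          show (-(-m)/2-1)^2 + (0:ℝ)^2 = (m/2-1)^2 by ring,
          Real.sqrt_sq_eq_abs, abs_of_nonpos (by linarith)]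
        ring
      have hB : Real.sqrt (((-m:ℝ)-0)^2 + ((0:ℝ)-0)^2) = m := by
        rw [show ((0:ℝ)-0) = 0 by ring,
          show ((-m:ℝ)-0)^2 + (0:ℝ)^2 = m^2 by ring,
          Real.sqrt_sq_eq_abs, abs_of_pos hm0]
      rw [hA, hB] at hthis
      have h1 : L * m ≤ |L| * m := mul_le_mul_of_nonneg_right (le_abs_self L) hm0.le
      have h3 : |L| * m ≤ |L| * (1/(2*(|L|+1))) :=
        mul_le_mul_of_nonneg_left hm2 (abs_nonneg L)
      have h4 : |L| * (1/(2*(|L|+1))) < 1/2 := by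
        rw [mul_one_div, div_lt_iff₀ (by positivity)]
        nlinarith [abs_nonneg L]
      linarith
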